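/- For every ε ∈ ℝ, the function w(ε,t) := sin(t)·exp(ε·(t − (1/2)·sin(2t))) satisfies the ordinary differential equation w_tt(ε,t) + b(ε,t)·w(ε,t) = 0 for all t ∈ ℝ, where b(ε,t) := 1 − 4ε·sin(2t) − ε²·(1−cos(2t))². -/

import Mathlib

open Real

private lemma hg (ε x : ℝ) :
    HasDerivAt (fun x : ℝ => ε * (x - Real.sin (2 * x) / 2))
      (ε * (1 - Real.cos (2 * x))) x := by
  have h2x : HasDerivAt (fun x : ℝ => 2 * x) 2 x := by
    simpa using (hasDerivAt_id x).const_mul 2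
  have hs : HasDerivAt (fun x : ℝ => Real.sin (2 * x)) (Real.cos (2 * x) * 2) x :=
    (Real.hasDerivAt_sin (2 * x)).comp x h2x
  have : HasDerivAt (fun x : ℝ => x - Real.sin (2 * x) / 2)
      (1 - Real.cos (2 * x) * 2 / 2) x :=
    (hasDerivAt_id x).sub (hs.div_const 2)
  simpa [mul_comm, mul_assoc, mul_div_assoc] using this.const_mul ε

private lemma hw1 (ε x : ℝ) :
    HasDerivAt (fun x : ℝ => Real.sin x * Real.exp (ε * (x - Real.sin (2 * x) / 2)))
      ((Real.cos x + Real.sin x * (ε * (1 - Real.cos (2 * x)))) *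
        Real.exp (ε * (x - Real.sin (2 * x) / 2))) x := by
  have he := (hg ε x).exp
  have : HasDerivAt (fun x : ℝ => Real.sin x * Real.exp (ε * (x - Real.sin (2 * x) / 2))) _ x :=
    (Real.hasDerivAt_sin x).mul he
  convert this using 1
  ring

theorem w_solves_ode (ε : ℝ) (t : ℝ) :
    deriv (deriv (fun x : ℝ =>
        Real.sin x * Real.exp (ε * (x - Real.sin (2 * x) / 2)))) t
      + (1 - 4 * ε * Real.sin (2 * t) - ε ^ 2 * (1 - Real.cos (2 * t)) ^ 2)
        * (Real.sin t * Real.exp (ε * (t - Real.sin (2 * t) / 2))) = 0 := by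
  have hd1 : deriv (fun x : ℝ =>
      Real.sin x * Real.exp (ε * (x - Real.sin (2 * x) / 2)))
      = fun x => (Real.cos x + Real.sin x * (ε * (1 - Real.cos (2 * x)))) *
        Real.exp (ε * (x - Real.sin (2 * x) / 2)) := by
    funext x; exact (hw1 ε x).deriv
  rw [hd1]
  have h2x : HasDerivAt (fun x : ℝ => 2 * x) 2 t := by
    simpa using (hasDerivAt_id t).const_mul 2
  have hc2 : HasDerivAt (fun x : ℝ => Real.cos (2 * x)) (-Real.sin (2 * t) * 2) t :=
    (Real.hasDerivAt_cos (2 * t)).comp t h2x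
  have hfac : HasDerivAt (fun x : ℝ =>
      Real.cos x + Real.sin x * (ε * (1 - Real.cos (2 * x))))
      (-Real.sin t + (Real.cos t * (ε * (1 - Real.cos (2 * t)))
        + Real.sin t * (ε * (0 - (-Real.sin (2 * t) * 2))))) t := by
    exact (Real.hasDerivAt_cos t).add
      ((Real.hasDerivAt_sin t).mul (((hasDerivAt_const t (1:ℝ)).sub hc2).const_mul ε))
  have hd2 : HasDerivAt (fun x : ℝ => (Real.cos x + Real.sin x * (ε * (1 - Real.cos (2 * x)))) *
      Real.exp (ε * (x - Real.sin (2 * x) / 2))) _ t := hfac.mul (hg ε t).exp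
  rw [hd2.deriv]
  set E := Real.exp (ε * (t - Real.sin (2 * t) / 2))
  have hcos : Real.cos (2 * t) = 1 - 2 * Real.sin t ^ 2 := by
    rw [Real.cos_two_mul']; ring_nf; rw [Real.sin_sq_add_cos_sq t |>.symm] <;> ring
  have hsin : Real.sin (2 * t) = 2 * Real.sin t * Real.cos t := Real.sin_two_mul t
  have hpy : Real.sin t ^ 2 + Real.cos t ^ 2 = 1 := Real.sin_sq_add_cos_sq t
  rw [hcos, hsin]
  nlinarith [sq_nonneg (Real.sin t), sq_nonneg E, hpy]
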